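/- Let K, D, V₀ be real n×n matrices, M(t) = exp(tK), and V(t) = M(t)·V₀·M(t)ᵀ + ∫₀ᵗ M(s)·D·M(s)ᵀ ds. Then for every real t the covariance matrix satisfies the explicit linear equation K·V(t) + V(t)·Kᵀ = −D + K·M(t)·V₀·M(t)ᵀ + M(t)·V₀·M(t)ᵀ·Kᵀ + M(t)·D·M(t)ᵀ. -/

import Mathlib

/-!
STATEMENT 11: For real n×n matrices `K, D, V₀`, `M(t) = exp(tK)` and
`V(t) = M(t)·V₀·M(t)ᵀ + ∫₀ᵗ M(s)·D·M(s)ᵀ ds`, for every real `t`,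
`K·V(t) + V(t)·Kᵀ = −D + K·M(t)·V₀·M(t)ᵀ + M(t)·V₀·M(t)ᵀ·Kᵀ + M(t)·D·M(t)ᵀ`.
-/

open Matrix

noncomputable section EntryDeriv

/-- Entrywise derivative of `s ↦ exp (s • K)`, stated without any choice of matrix norm. -/
lemma entry_hasDerivAt_exp {n : ℕ} (K : Matrix (Fin n) (Fin n) ℝ) (s : ℝ)
    (i j : Fin n) :
    HasDerivAt (fun u : ℝ => NormedSpace.exp (u • K) i j)
      ((K * NormedSpace.exp (s • K)) i j) s := by
  letI : SeminormedRing (Matrix (Fin n) (Fin n) ℝ) := Matrix.linftyOpSemiNormedRing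
  letI : NormedRing (Matrix (Fin n) (Fin n) ℝ) := Matrix.linftyOpNormedRing
  letI : NormedAlgebra ℝ (Matrix (Fin n) (Fin n) ℝ) := Matrix.linftyOpNormedAlgebra
  have h : HasDerivAt (fun u : ℝ => NormedSpace.exp (u • K))
      (K * NormedSpace.exp (s • K)) s := hasDerivAt_exp_smul_const' K s
  have hL : Continuous (fun A : Matrix (Fin n) (Fin n) ℝ => A i j) :=
    ((LinearMap.proj j).comp
      (LinearMap.proj (R := ℝ) (φ := fun _ : Fin n => Fin n → ℝ) i)).continuous_of_finiteDimensional
  let L : Matrix (Fin n) (Fin n) ℝ →L[ℝ] ℝ :=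
    ⟨(LinearMap.proj j).comp (LinearMap.proj (R := ℝ) (φ := fun _ : Fin n => Fin n → ℝ) i), hL⟩
  exact L.hasFDerivAt.comp_hasDerivAt s h

end EntryDeriv

attribute [local instance] Matrix.normedAddCommGroup Matrix.normedSpace

noncomputable section

/-- `M(t) = exp(tK)`. -/
def M {n : ℕ} (K : Matrix (Fin n) (Fin n) ℝ) (t : ℝ) : Matrix (Fin n) (Fin n) ℝ :=
  NormedSpace.exp (t • K)

/-- Covariance matrix at time `t`: `V(t) = M(t)·V₀·M(t)ᵀ + ∫₀ᵗ M(s)·D·M(s)ᵀ ds`. -/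
def covMatrix {n : ℕ} (K D V₀ : Matrix (Fin n) (Fin n) ℝ) (t : ℝ) :
    Matrix (Fin n) (Fin n) ℝ :=
  M K t * V₀ * (M K t)ᵀ + ∫ s in (0:ℝ)..t, M K s * D * (M K s)ᵀ

lemma hasDerivAt_M {n : ℕ} (K : Matrix (Fin n) (Fin n) ℝ) (s : ℝ) :
    HasDerivAt (M K) (K * M K s) s := by
  refine hasDerivAt_pi.2 ?_
  intro i
  refine hasDerivAt_pi.2 ?_
  intro j
  exact entry_hasDerivAt_exp K s i j

/-- Entrywise product rule for matrix-valued functions (sup norm on matrices). -/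
lemma HasDerivAt.matrix_mul {n : ℕ} {f g : ℝ → Matrix (Fin n) (Fin n) ℝ}
    {f' g' : Matrix (Fin n) (Fin n) ℝ} {s : ℝ}
    (hf : HasDerivAt f f' s) (hg : HasDerivAt g g' s) :
    HasDerivAt (fun u => f u * g u) (f' * g s + f s * g') s := by
  refine hasDerivAt_pi.2 ?_
  intro i
  refine hasDerivAt_pi.2 ?_
  intro j
  have hfe : ∀ i j, HasDerivAt (fun u => f u i j) (f' i j) s := fun i j =>
    hasDerivAt_pi.1 (hasDerivAt_pi.1 hf i) j
  have hge : ∀ i j, HasDerivAt (fun u => g u i j) (g' i j) s := fun i j =>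
    hasDerivAt_pi.1 (hasDerivAt_pi.1 hg i) j
  have : HasDerivAt (fun u => ∑ k, f u i k * g u k j)
      (∑ k, (f' i k * g s k j + f s i k * g' k j)) s :=
    HasDerivAt.fun_sum fun k _ => (hfe i k).mul (hge k j)
  have heq : (fun u => (f u * g u) i j) = fun u => ∑ k, f u i k * g u k j := by
    funext u; simp [Matrix.mul_apply]
  rw [heq]
  exact this.congr_deriv (by simp [Matrix.add_apply, Matrix.mul_apply, Finset.sum_add_distrib])

lemma M_transpose {n : ℕ} (K : Matrix (Fin n) (Fin n) ℝ) (s : ℝ) :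
    (M K s)ᵀ = M Kᵀ s := by
  rw [M, M, ← transpose_smul, Matrix.exp_transpose]

lemma exp_comm {n : ℕ} (K : Matrix (Fin n) (Fin n) ℝ) (s : ℝ) :
    K * NormedSpace.exp (s • K) = NormedSpace.exp (s • K) * K :=
  Commute.exp_right ((Commute.refl K).smul_right s)

lemma continuous_M {n : ℕ} (K : Matrix (Fin n) (Fin n) ℝ) : Continuous (M K) :=
  Differentiable.continuous (fun s => (hasDerivAt_M K s).differentiableAt)

lemma hasDerivAt_F {n : ℕ} (K D : Matrix (Fin n) (Fin n) ℝ) (s : ℝ) :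
    HasDerivAt (fun s => M K s * D * (M K s)ᵀ)
      (K * (M K s * D * (M K s)ᵀ) + (M K s * D * (M K s)ᵀ) * Kᵀ) s := by
  have h1 : HasDerivAt (fun s => M K s * D) (K * M K s * D + M K s * 0) s :=
    (hasDerivAt_M K s).matrix_mul (hasDerivAt_const s D)
  have h2 : HasDerivAt (M Kᵀ) (Kᵀ * M Kᵀ s) s := hasDerivAt_M Kᵀ s
  have h2' : HasDerivAt (fun s : ℝ => (M K s)ᵀ) ((M K s)ᵀ * Kᵀ) s := by
    simp only [M_transpose]
    have hc : Kᵀ * M Kᵀ s = M Kᵀ s * Kᵀ := by rw [M]; exact exp_comm Kᵀ s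
    exact hc ▸ h2
  have := h1.matrix_mul h2'
  convert this using 1
  rw [M_transpose]
  noncomm_ring

theorem covariance_matrix_explicit_linear_equation {n : ℕ}
    (K D V₀ : Matrix (Fin n) (Fin n) ℝ) (t : ℝ) :
    K * covMatrix K D V₀ t + covMatrix K D V₀ t * Kᵀ =
      -D + K * M K t * V₀ * (M K t)ᵀ + M K t * V₀ * (M K t)ᵀ * Kᵀ +
        M K t * D * (M K t)ᵀ := by
  have hcont : Continuous fun s => M K s * D * (M K s)ᵀ :=
    ((continuous_M K).mul continuous_const).mul ((continuous_M K).matrix_transpose)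
  have hc1 : Continuous (fun s => K * (M K s * D * (M K s)ᵀ)) := continuous_const.mul hcont
  have hc2 : Continuous (fun s => (M K s * D * (M K s)ᵀ) * Kᵀ) := hcont.mul continuous_const
  letI : TopologicalSpace (Matrix (Fin n) (Fin n) ℝ) := (inferInstance : PseudoMetricSpace (Matrix (Fin n) (Fin n) ℝ)).toUniformSpace.toTopologicalSpace
  have hF : IntervalIntegrable (fun s => M K s * D * (M K s)ᵀ) MeasureTheory.volume 0 t :=
    hcont.intervalIntegrable 0 t
  have hderiv : IntervalIntegrable
      (fun s => K * (M K s * D * (M K s)ᵀ) + (M K s * D * (M K s)ᵀ) * Kᵀ)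
      MeasureTheory.volume 0 t :=
    (show Continuous _ from (continuous_const.mul hcont).add (hcont.mul continuous_const)).intervalIntegrable 0 t
  have ftc : (∫ s in (0:ℝ)..t,
      (K * (M K s * D * (M K s)ᵀ) + (M K s * D * (M K s)ᵀ) * Kᵀ)) =
      M K t * D * (M K t)ᵀ - M K 0 * D * (M K 0)ᵀ :=
    intervalIntegral.integral_eq_sub_of_hasDerivAt (fun s _ => hasDerivAt_F K D s) hderiv
  have hM0 : M K 0 = 1 := by simp [M, NormedSpace.exp_zero]
  let L1 : Matrix (Fin n) (Fin n) ℝ →L[ℝ] Matrix (Fin n) (Fin n) ℝ :=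
    ⟨LinearMap.mulLeft ℝ K, (LinearMap.mulLeft ℝ K).continuous_of_finiteDimensional⟩
  let L2 : Matrix (Fin n) (Fin n) ℝ →L[ℝ] Matrix (Fin n) (Fin n) ℝ :=
    ⟨LinearMap.mulRight ℝ Kᵀ, (LinearMap.mulRight ℝ Kᵀ).continuous_of_finiteDimensional⟩
  have hL : (∫ s in (0:ℝ)..t, K * (M K s * D * (M K s)ᵀ)) =
      K * ∫ s in (0:ℝ)..t, M K s * D * (M K s)ᵀ :=
    L1.intervalIntegral_comp_comm hF
  have hR : (∫ s in (0:ℝ)..t, (M K s * D * (M K s)ᵀ) * Kᵀ) =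
      (∫ s in (0:ℝ)..t, M K s * D * (M K s)ᵀ) * Kᵀ :=
    L2.intervalIntegral_comp_comm hF
  rw [intervalIntegral.integral_add ((show Continuous (fun s => K * (M K s * D * (M K s)ᵀ)) from hc1).intervalIntegrable 0 t)
    ((show Continuous (fun s => (M K s * D * (M K s)ᵀ) * Kᵀ) from hc2).intervalIntegrable 0 t), hL, hR, hM0] at ftc
  have key : K * (∫ s in (0:ℝ)..t, M K s * D * (M K s)ᵀ) +
      (∫ s in (0:ℝ)..t, M K s * D * (M K s)ᵀ) * Kᵀ = M K t * D * (M K t)ᵀ - D := by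
    simpa using ftc
  simp only [covMatrix, mul_add, add_mul]
  rw [add_add_add_comm, key]
  noncomm_ring

end
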